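/- Let (a_m)_{m≥1} and (b_n)_{n≥1} be sequences of real numbers, p, q > 0, and suppose that the sequences ((1 + a_m²)^{-p/2})_m and ((1 + b_n²)^{-q/2})_n are summable. Then the double sequence ((1 + a_m² + b_n²)^{-(p+q)/2})_{m,n} is summable. -/
import Mathlib

lemma aux_rpow_anti {c d r : ℝ} (hc : 1 ≤ c) (hcd : c ≤ d) (hr : 0 ≤ r) :
    d ^ (-r) ≤ c ^ (-r) := by
  have hc0 : 0 < c := lt_of_lt_of_le one_pos hc
  rw [Real.rpow_neg hc0.le, Real.rpow_neg (hc0.trans_le hcd).le]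
  exact inv_anti₀ (Real.rpow_pos_of_pos hc0 r)
    (Real.rpow_le_rpow hc0.le hcd hr)

theorem stmt_1 (a b : ℕ → ℝ) (p q : ℝ) (hp : 0 < p) (hq : 0 < q)
    (ha : Summable fun m => (1 + (a m) ^ 2) ^ (-(p / 2)))
    (hb : Summable fun n => (1 + (b n) ^ 2) ^ (-(q / 2))) :
    Summable fun mn : ℕ × ℕ =>
      (1 + (a mn.1) ^ 2 + (b mn.2) ^ 2) ^ (-((p + q) / 2)) := by
  have hprod := ha.mul_of_nonneg hb
    (fun m => Real.rpow_nonneg (by positivity : (0:ℝ) ≤ 1 + (a m) ^ 2) _)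
    (fun n => Real.rpow_nonneg (by positivity : (0:ℝ) ≤ 1 + (b n) ^ 2) _)
  refine Summable.of_nonneg_of_le (fun mn => Real.rpow_nonneg (by positivity) _) ?_ hprod
  intro ⟨m, n⟩
  have h1 : (1 : ℝ) ≤ 1 + (a m) ^ 2 := by nlinarith [sq_nonneg (a m)]
  have h2 : (1 : ℝ) ≤ 1 + (b n) ^ 2 := by nlinarith [sq_nonneg (b n)]
  have hs : (0 : ℝ) < 1 + (a m) ^ 2 + (b n) ^ 2 := by positivity
  simp only
  have : -((p + q) / 2) = -(p / 2) + -(q / 2) := by ring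
  rw [this, Real.rpow_add hs]
  exact mul_le_mul (aux_rpow_anti h1 (by nlinarith) (by positivity))
    (aux_rpow_anti h2 (by nlinarith) (by positivity))
    (Real.rpow_nonneg hs.le _) (Real.rpow_nonneg (by positivity) _)
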